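/- Let F_n(·|δ²) be the noncentral chi-squared distribution function and u ∈ (0,1/2). If a number δ̂ ≥ 0 satisfies u ≤ F_n(n + δ̂² | δ²) ≤ 1 − u, then δ² − δ̂² ≤ √((4n + 8δ̂²)·log(1/u)) + 8·log(1/u) and δ² − δ̂² ≥ −√((4n + 8δ̂²)·log(1/u)). -/

import Mathlib

open MeasureTheory ProbabilityTheory Finset

/-- The noncentral chi-squared distribution `χ²_n(δ²)` with `δ² = ∑ i, δ i ^ 2`,
realized as the law of `∑ i, (Z i + δ i)^2` for i.i.d. standard Gaussians `Z i`. -/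
noncomputable def noncentralChiSq (n : ℕ) (δ : Fin n → ℝ) : Measure ℝ :=
  Measure.map (fun x => ∑ i, (x i + δ i) ^ 2)
    (Measure.pi fun _ : Fin n => gaussianReal 0 1)

/-- The distribution function of `χ²_n(δ²)`. -/
noncomputable def noncentralChiSqCDF (n : ℕ) (δ : Fin n → ℝ) (t : ℝ) : ℝ :=
  (noncentralChiSq n δ (Set.Iic t)).toReal

open Real
open scoped ENNReal NNReal


lemma aux_quad_le_exp {s : ℝ} (hs : 0 ≤ s) : 1 + s + s ^ 2 / 2 ≤ rexp s := by
  have hd : ∀ x : ℝ, HasDerivAt (fun s : ℝ => rexp s - (1 + s + s ^ 2 / 2))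
      (rexp x - (1 + x)) x := by
    intro x
    have h1 : HasDerivAt (fun s : ℝ => 1 + s + s ^ 2 / 2) (1 + x) x := by
      have := ((hasDerivAt_id x).const_add (1:ℝ)).add ((hasDerivAt_pow 2 x).div_const 2)
      exact this.congr_deriv (by norm_num)
    exact (Real.hasDerivAt_exp x).sub h1
  have hmono : MonotoneOn (fun s : ℝ => rexp s - (1 + s + s ^ 2 / 2)) (Set.Ici 0) := by
    refine monotoneOn_of_deriv_nonneg (convex_Ici 0) ?_ ?_ ?_
    · exact (Real.continuous_exp.sub (by continuity)).continuousOn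
    · intro x hx; exact (hd x).differentiableAt.differentiableWithinAt
    · intro x hx
      rw [(hd x).deriv]
      have := Real.add_one_le_exp x
      linarith
  have := hmono (Set.self_mem_Ici) (Set.mem_Ici.2 hs) hs
  simp only [ne_eq, OfNat.ofNat_ne_zero, not_false_eq_true, zero_pow, zero_div, add_zero,
    Real.exp_zero] at this
  linarith

lemma aux_exp_le_one_add {s : ℝ} (hs : 0 ≤ s) : rexp (s - s ^ 2 / 2) ≤ 1 + s := by
  have hd : ∀ x : ℝ, HasDerivAt (fun s : ℝ => (1 + s) * rexp (s ^ 2 / 2 - s))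
      (x ^ 2 * rexp (x ^ 2 / 2 - x)) x := by
    intro x
    have hg : HasDerivAt (fun s : ℝ => s ^ 2 / 2 - s) (x - 1) x := by
      have := ((hasDerivAt_pow 2 x).div_const 2).sub (hasDerivAt_id x)
      exact this.congr_deriv (by norm_num)
    have he : HasDerivAt (fun s : ℝ => rexp (s ^ 2 / 2 - s)) (rexp (x ^ 2 / 2 - x) * (x - 1)) x :=
      (Real.hasDerivAt_exp _).comp x hg
    have h1 : HasDerivAt (fun s : ℝ => 1 + s) 1 x := by
      simpa using (hasDerivAt_id x).const_add (1:ℝ)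
    have := h1.mul he
    exact this.congr_deriv (by ring)
  have hmono : MonotoneOn (fun s : ℝ => (1 + s) * rexp (s ^ 2 / 2 - s)) (Set.Ici 0) := by
    refine monotoneOn_of_deriv_nonneg (convex_Ici 0) ?_ ?_ ?_
    · exact (continuous_const.add continuous_id).continuousOn.mul
        (Real.continuous_exp.comp (by continuity)).continuousOn
    · intro x hx; exact (hd x).differentiableAt.differentiableWithinAt
    · intro x hx
      rw [(hd x).deriv]
      positivity
  have h1 := hmono (Set.self_mem_Ici) (Set.mem_Ici.2 hs) hs
  simp only [add_zero, ne_eq, OfNat.ofNat_ne_zero, not_false_eq_true, zero_pow, zero_div, zero_sub,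
    neg_zero, Real.exp_zero, mul_one] at h1
  have hpos : 0 < rexp (s ^ 2 / 2 - s) := Real.exp_pos _
  calc rexp (s - s ^ 2 / 2) = (rexp (s ^ 2 / 2 - s))⁻¹ * 1 := by
        rw [show s - s ^ 2 / 2 = -(s ^ 2 / 2 - s) by ring, Real.exp_neg, mul_one]
    _ ≤ (rexp (s ^ 2 / 2 - s))⁻¹ * ((1 + s) * rexp (s ^ 2 / 2 - s)) :=
        mul_le_mul_of_nonneg_left h1 (inv_nonneg.2 hpos.le)
    _ = 1 + s := by field_simp

lemma aux_log_upper {s : ℝ} (h0 : 0 ≤ s) (h1 : s < 1) :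
    -Real.log (1 - s) ≤ s + s ^ 2 / (2 * (1 - s)) := by
  have hpos : (0:ℝ) < 1 - s := by linarith
  set q : ℝ := s ^ 2 / (2 * (1 - s)) with hq_def
  have hq0 : 0 ≤ q := by positivity
  have hq : (1 - s) * q = s ^ 2 / 2 := by
    rw [hq_def]; field_simp
  rw [← Real.log_inv]
  rw [Real.log_le_iff_le_exp (by positivity)]
  have h2 := Real.add_one_le_exp q
  have h3 := aux_quad_le_exp h0
  have hmul : (1 + s + s ^ 2 / 2) * (1 + q) ≤ rexp s * rexp q :=
    mul_le_mul h3 (by linarith) (by linarith) (Real.exp_nonneg s)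
  have key : 1 ≤ (1 - s) * rexp (s + q) := by
    rw [Real.exp_add]
    have hexp : (1 - s) * ((1 + s + s ^ 2 / 2) * (1 + q)) ≤ (1 - s) * (rexp s * rexp q) :=
      mul_le_mul_of_nonneg_left hmul (by linarith)
    nlinarith [pow_nonneg h0 4]
  rw [inv_eq_one_div, div_le_iff₀ hpos]
  linarith [key, mul_comm (1 - s) (rexp (s + q))]

lemma aux_log_lower {s : ℝ} (h0 : 0 ≤ s) : s - s ^ 2 / 2 ≤ Real.log (1 + s) := by
  rw [Real.le_log_iff_exp_le (by linarith)]
  exact aux_exp_le_one_add h0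


lemma aux_integrable_rexp_quad {b : ℝ} (hb : 0 < b) (c d : ℝ) :
    Integrable (fun x : ℝ => rexp (-b * x ^ 2 + c * x + d)) := by
  have h := integrable_cexp_quadratic (b := (b : ℂ)) (by simpa using hb) (c : ℂ) (d : ℂ)
  refine h.norm.congr (Filter.Eventually.of_forall fun x => ?_)
  show ‖Complex.exp _‖ = _
  rw [Complex.norm_exp]
  congr 1
  rw [show (-(b:ℂ)) * x ^ 2 + c * x + d = ((-b * x ^ 2 + c * x + d : ℝ) : ℂ) by push_cast; ring]
  exact Complex.ofReal_re _

lemma aux_integral_rexp_quad {b : ℝ} (hb : 0 < b) (c d : ℝ) :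
    ∫ x : ℝ, rexp (-b * x ^ 2 + c * x + d)
      = Real.sqrt (π / b) * rexp (d + c ^ 2 / (4 * b)) := by
  have h := integral_cexp_quadratic (b := (-b : ℂ)) (by simpa using hb) (c : ℂ) (d : ℂ)
  apply Complex.ofReal_injective
  have hL : ((∫ x : ℝ, rexp (-b * x ^ 2 + c * x + d) : ℝ) : ℂ)
      = ∫ x : ℝ, Complex.exp ((-b : ℂ) * x ^ 2 + c * x + d) := by
    rw [show (fun x : ℝ => Complex.exp ((-b : ℂ) * x ^ 2 + c * x + d))
        = fun x : ℝ => ((rexp (-b * x ^ 2 + c * x + d) : ℝ) : ℂ) from funext fun x => by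
      rw [show (-(b:ℂ)) * x ^ 2 + c * x + d = ((-b * x ^ 2 + c * x + d : ℝ) : ℂ) by push_cast; ring,
        Complex.ofReal_exp]]
    exact (integral_ofReal (𝕜 := ℂ)).symm
  rw [hL, h]
  have h1 : ((π : ℂ) / - - (b:ℂ)) = ((π / b : ℝ) : ℂ) := by push_cast; ring
  have h2 : ((π / b : ℝ) : ℂ) ^ (1 / 2 : ℂ) = ((Real.sqrt (π / b) : ℝ) : ℂ) := by
    rw [show (1/2 : ℂ) = ((1/2 : ℝ) : ℂ) by norm_num, ← Complex.ofReal_cpow (by positivity),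
      Real.sqrt_eq_rpow]
  rw [h1, h2, show ((d:ℂ) - (c:ℂ) ^ 2 / (4 * -(b:ℂ))) = ((d + c ^ 2 / (4 * b) : ℝ) : ℂ) by
    push_cast; ring, ← Complex.ofReal_exp, ← Complex.ofReal_mul]

lemma gaussian_pdf_integral_eq (g : ℝ → ℝ) :
    ∫ y, g y ∂(gaussianReal 0 1) = ∫ y, gaussianPDFReal 0 1 y * g y := by
  rw [gaussianReal_of_var_ne_zero 0 one_ne_zero]
  have hm : Measurable fun y => (gaussianPDFReal 0 1 y).toNNReal :=
    (measurable_gaussianPDFReal 0 1).real_toNNReal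
  rw [show gaussianPDF 0 1 = fun y => ((gaussianPDFReal 0 1 y).toNNReal : ℝ≥0∞) from rfl,
    integral_withDensity_eq_integral_smul hm]
  congr 1
  ext y
  rw [NNReal.smul_def, smul_eq_mul, Real.coe_toNNReal _ (gaussianPDFReal_nonneg 0 1 y)]

lemma gaussian_pdf_integrable_iff (g : ℝ → ℝ) (hg : Measurable g) :
    Integrable g (gaussianReal 0 1) ↔ Integrable (fun y => gaussianPDFReal 0 1 y * g y) := by
  rw [gaussianReal_of_var_ne_zero 0 one_ne_zero]
  have hm : Measurable fun y => (gaussianPDFReal 0 1 y).toNNReal :=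
    (measurable_gaussianPDFReal 0 1).real_toNNReal
  rw [show gaussianPDF 0 1 = fun y => ((gaussianPDFReal 0 1 y).toNNReal : ℝ≥0∞) from rfl,
    integrable_withDensity_iff_integrable_smul hm]
  constructor <;> intro h <;> refine h.congr (Filter.Eventually.of_forall fun y => ?_) <;>
    show _ = _ <;>
    simp only [NNReal.smul_def, smul_eq_mul, Real.coe_toNNReal _ (gaussianPDFReal_nonneg 0 1 y)]

lemma pdf_mul_exp_eq (dd t : ℝ) (y : ℝ) :
    gaussianPDFReal 0 1 y * rexp (t * (y + dd) ^ 2)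
      = (Real.sqrt (2 * π))⁻¹ * rexp (-(1 / 2 - t) * y ^ 2 + (2 * t * dd) * y + t * dd ^ 2) := by
  unfold gaussianPDFReal
  rw [mul_assoc, ← Real.exp_add]
  push_cast
  rw [mul_one]
  congr 1
  rw [Real.exp_eq_exp]
  ring

lemma integrable_exp_sq_gaussian (dd t : ℝ) (ht : t < 1 / 2) :
    Integrable (fun y => rexp (t * (y + dd) ^ 2)) (gaussianReal 0 1) := by
  rw [gaussian_pdf_integrable_iff _ (by fun_prop)]
  have hb : 0 < 1 / 2 - t := by linarith
  have := (aux_integrable_rexp_quad hb (2 * t * dd) (t * dd ^ 2)).const_mul (Real.sqrt (2 * π))⁻¹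
  refine this.congr (Filter.Eventually.of_forall fun y => ?_)
  exact (pdf_mul_exp_eq dd t y).symm

lemma mgf_sq_gaussian (dd t : ℝ) (ht : t < 1 / 2) :
    mgf (fun y => (y + dd) ^ 2) (gaussianReal 0 1) t
      = rexp (t * dd ^ 2 / (1 - 2 * t)) / Real.sqrt (1 - 2 * t) := by
  have hb : 0 < 1 / 2 - t := by linarith
  have h1t : 0 < 1 - 2 * t := by linarith
  rw [mgf, gaussian_pdf_integral_eq]
  simp_rw [pdf_mul_exp_eq]
  rw [integral_const_mul, aux_integral_rexp_quad hb]
  have hsqrt : (Real.sqrt (2 * π))⁻¹ * Real.sqrt (π / (1 / 2 - t))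
      = (Real.sqrt (1 - 2 * t))⁻¹ := by
    have h2 : π / (1 / 2 - t) = 2 * π * (1 - 2 * t)⁻¹ := by
      rw [div_eq_iff hb.ne']
      field_simp
    have h2π : (2 * π) ≠ 0 := by positivity
    rw [h2, ← Real.sqrt_inv (2 * π), ← Real.sqrt_mul (by positivity), ← Real.sqrt_inv,
      ← mul_assoc, inv_mul_cancel₀ h2π, one_mul]
  have hexp : t * dd ^ 2 + (2 * t * dd) ^ 2 / (4 * (1 / 2 - t)) = t * dd ^ 2 / (1 - 2 * t) := by
    rw [show 4 * (1 / 2 - t) = 2 * (1 - 2 * t) by ring]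
    rw [eq_div_iff h1t.ne', add_mul, div_mul_eq_mul_div, mul_div_mul_right _ _ h1t.ne'] ; ring
  rw [← mul_assoc, hsqrt, hexp, mul_comm, ← div_eq_mul_inv]

lemma pi_map_eval (n : ℕ) (i : Fin n) :
    (Measure.pi fun _ : Fin n => gaussianReal 0 1).map (Function.eval i) = gaussianReal 0 1 := by
  classical
  refine Measure.ext fun s hs => ?_
  rw [Measure.map_apply (measurable_pi_apply i) hs, Set.eval_preimage, Measure.pi_pi]
  rw [Fintype.prod_eq_single i (fun j hj => by simp [Function.update_of_ne hj])]
  simp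

lemma iIndepFun_eval (n : ℕ) :
    iIndepFun (fun i (x : Fin n → ℝ) => x i)
      (Measure.pi fun _ : Fin n => gaussianReal 0 1) := by
  classical
  rw [iIndepFun_iff_measure_inter_preimage_eq_mul]
  intro S sets hsets
  have hset_eq : (⋂ i ∈ S, (fun x : Fin n → ℝ => x i) ⁻¹' sets i)
      = Set.pi Set.univ (fun j => if j ∈ S then sets j else Set.univ) := by
    ext x
    simp only [Set.mem_iInter, Set.mem_preimage, Set.mem_univ_pi]
    constructor
    · intro h j
      by_cases hj : j ∈ S <;> simp [hj, h]
    · intro h i hi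
      have := h i
      simpa [hi] using this
  rw [hset_eq, Measure.pi_pi]
  simp_rw [apply_ite (gaussianReal 0 1), measure_univ]
  rw [Finset.prod_ite_mem Finset.univ S _, Finset.univ_inter]
  refine Finset.prod_congr rfl fun i hi => ?_
  rw [show ((fun x : Fin n → ℝ => x i) ⁻¹' sets i) = (Function.eval i) ⁻¹' sets i from rfl,
    ← Measure.map_apply (measurable_pi_apply i) (hsets i hi), pi_map_eval n i]

lemma integrable_exp_mul_coord (n : ℕ) (δ : Fin n → ℝ) (i : Fin n) {t : ℝ} (ht : t < 1 / 2) :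
    Integrable (fun x : Fin n → ℝ => rexp (t * (x i + δ i) ^ 2))
      (Measure.pi fun _ : Fin n => gaussianReal 0 1) := by
  have h := integrable_exp_sq_gaussian (δ i) t ht
  rw [← pi_map_eval n i] at h
  exact (integrable_map_measure h.aestronglyMeasurable
    (measurable_pi_apply i).aemeasurable).mp h

lemma mgf_coord (n : ℕ) (δ : Fin n → ℝ) (i : Fin n) {t : ℝ} (ht : t < 1 / 2) :
    mgf (fun x : Fin n → ℝ => (x i + δ i) ^ 2) (Measure.pi fun _ : Fin n => gaussianReal 0 1) t
      = rexp (t * δ i ^ 2 / (1 - 2 * t)) / Real.sqrt (1 - 2 * t) := by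
  rw [← mgf_sq_gaussian (δ i) t ht, mgf, mgf]
  conv_rhs => rw [← pi_map_eval n i]
  rw [integral_map (measurable_pi_apply i).aemeasurable
    (Measurable.aestronglyMeasurable (by fun_prop))]

lemma mgf_noncentral_sum (n : ℕ) (δ : Fin n → ℝ) {t : ℝ} (ht : t < 1 / 2) :
    mgf (fun x : Fin n → ℝ => ∑ i, (x i + δ i) ^ 2)
        (Measure.pi fun _ : Fin n => gaussianReal 0 1) t
      = rexp (t * (∑ i, δ i ^ 2) / (1 - 2 * t)) / Real.sqrt (1 - 2 * t) ^ n := by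
  have hindep := (iIndepFun_eval n).comp (fun i (y : ℝ) => (y + δ i) ^ 2) (fun i => by fun_prop)
  have hmeas : ∀ i : Fin n, Measurable fun x : Fin n → ℝ => (x i + δ i) ^ 2 :=
    fun i => by fun_prop
  have hXeq : (∑ i, fun x : Fin n → ℝ => (x i + δ i) ^ 2)
      = fun x : Fin n → ℝ => ∑ i, (x i + δ i) ^ 2 := by
    ext x; simp [Finset.sum_apply]
  calc mgf (fun x : Fin n → ℝ => ∑ i, (x i + δ i) ^ 2) _ t
      = ∏ i, mgf (fun x : Fin n → ℝ => (x i + δ i) ^ 2)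
          (Measure.pi fun _ : Fin n => gaussianReal 0 1) t := by
        rw [← hXeq]; exact hindep.mgf_sum hmeas Finset.univ
    _ = ∏ i : Fin n, rexp (t * δ i ^ 2 / (1 - 2 * t)) / Real.sqrt (1 - 2 * t) :=
        Finset.prod_congr rfl fun i _ => mgf_coord n δ i ht
    _ = rexp (t * (∑ i, δ i ^ 2) / (1 - 2 * t)) / Real.sqrt (1 - 2 * t) ^ n := by
        rw [Finset.prod_div_distrib, ← Real.exp_sum, Finset.prod_const, card_univ,
          Fintype.card_fin]
        congr 1
        rw [← Finset.sum_div, ← Finset.mul_sum]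

lemma integrable_exp_noncentral (n : ℕ) (δ : Fin n → ℝ) {t : ℝ} (ht : t < 1 / 2) :
    Integrable (fun x : Fin n → ℝ => rexp (t * ∑ i, (x i + δ i) ^ 2))
      (Measure.pi fun _ : Fin n => gaussianReal 0 1) := by
  have hindep := (iIndepFun_eval n).comp (fun i (y : ℝ) => (y + δ i) ^ 2) (fun i => by fun_prop)
  have hmeas : ∀ i : Fin n, Measurable fun x : Fin n → ℝ => (x i + δ i) ^ 2 :=
    fun i => by fun_prop
  have h := hindep.integrable_exp_mul_sum hmeas
    (s := Finset.univ) (fun i _ => integrable_exp_mul_coord n δ i ht)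
  refine h.congr (Filter.Eventually.of_forall fun x => ?_)
  simp [Finset.sum_apply]

lemma tail_upper (n : ℕ) (hn : 1 ≤ n) (δ : Fin n → ℝ) {r : ℝ} (hr : 0 ≤ r) :
    ((noncentralChiSq n δ) (Set.Ici ((n : ℝ) + (∑ i, δ i ^ 2) + r))).toReal
      ≤ rexp (-(r ^ 2 / (4 * ((n : ℝ) + 2 * ∑ i, δ i ^ 2) + 4 * r))) := by
  have hδsq0 : (0:ℝ) ≤ ∑ i, δ i ^ 2 := Finset.sum_nonneg fun i _ => sq_nonneg _
  set δsq : ℝ := ∑ i, δ i ^ 2 with hδsq_def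
  set a : ℝ := (n : ℝ) + 2 * δsq with ha_def
  have ha : (1:ℝ) ≤ a := by
    have : (1:ℝ) ≤ (n:ℝ) := by exact_mod_cast hn
    simp only [ha_def]; linarith
  have har : (0:ℝ) < a + r := by linarith
  set t : ℝ := r / (2 * (a + r)) with ht_def
  have ht0 : 0 ≤ t := by positivity
  have ht : t < 1 / 2 := by
    rw [ht_def, div_lt_iff₀ (by linarith)]
    linarith
  have h1t : 0 < 1 - 2 * t := by linarith
  set ε : ℝ := (n : ℝ) + δsq + r with hε_def
  have hXm : Measurable fun x : Fin n → ℝ => ∑ i, (x i + δ i) ^ 2 := by fun_prop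
  rw [noncentralChiSq, Measure.map_apply hXm measurableSet_Ici]
  have hchern := measure_ge_le_exp_mul_mgf (μ := Measure.pi fun _ : Fin n => gaussianReal 0 1)
    (X := fun x : Fin n → ℝ => ∑ i, (x i + δ i) ^ 2) ε ht0 (integrable_exp_noncentral n δ ht)
  have hsets : (fun x : Fin n → ℝ => ∑ i, (x i + δ i) ^ 2) ⁻¹' Set.Ici ε
      = {ω : Fin n → ℝ | ε ≤ ∑ i, (ω i + δ i) ^ 2} := rfl
  rw [hsets]
  refine hchern.trans ?_
  rw [mgf_noncentral_sum n δ ht]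
  have hsqrtpow : Real.sqrt (1 - 2 * t) ^ n = rexp ((n : ℝ) * (Real.log (1 - 2 * t) / 2)) := by
    rw [show Real.sqrt (1 - 2 * t) = rexp (Real.log (1 - 2 * t) / 2) by
        rw [← Real.log_sqrt h1t.le, Real.exp_log (Real.sqrt_pos.2 h1t)]]
    rw [← Real.exp_nat_mul]
  rw [hsqrtpow, ← Real.exp_sub, ← Real.exp_add, Real.exp_le_exp]
  -- now a pure inequality on reals
  have hlog : -Real.log (1 - 2 * t) ≤ 2 * t + (2 * t) ^ 2 / (2 * (1 - 2 * t)) :=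
    aux_log_upper (by linarith) (by linarith)
  have key1 : t * δsq / (1 - 2 * t) = t * δsq + 2 * t ^ 2 * δsq / (1 - 2 * t) := by
    rw [div_eq_iff h1t.ne', add_mul, div_mul_cancel₀ _ h1t.ne']; ring
  have key2 : -((n : ℝ) * (Real.log (1 - 2 * t) / 2)) ≤ (n:ℝ) * t + (n:ℝ) * t ^ 2 / (1 - 2 * t) := by
    have h4 : (2 * t) ^ 2 / (2 * (1 - 2 * t)) = 2 * (t ^ 2 / (1 - 2 * t)) := by
      field_simp
    have hn0 : (0:ℝ) ≤ (n : ℝ) / 2 := by positivity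
    have := mul_le_mul_of_nonneg_left (hlog.trans_eq (by rw [h4])) hn0
    calc -((n : ℝ) * (Real.log (1 - 2 * t) / 2)) = (n:ℝ) / 2 * (-Real.log (1 - 2 * t)) := by ring
      _ ≤ (n:ℝ) / 2 * (2 * t + 2 * (t ^ 2 / (1 - 2 * t))) := this
      _ = (n:ℝ) * t + (n:ℝ) * t ^ 2 / (1 - 2 * t) := by ring
  have key4 : 2 * t ^ 2 * δsq / (1 - 2 * t) + (n:ℝ) * t ^ 2 / (1 - 2 * t)
      = t ^ 2 * a / (1 - 2 * t) := by
    rw [ha_def]; field_simp; ring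
  have key3 : -t * r + t ^ 2 * a / (1 - 2 * t) = -(r ^ 2 / (4 * (a + r))) := by
    rw [ht_def]
    have h1t' : 1 - 2 * (r / (2 * (a + r))) = a / (a + r) := by
      field_simp
      ring
    rw [h1t']
    have ha0 : a ≠ 0 := by linarith
    field_simp
    ring
  have hεeq : -t * ε + t * δsq / (1 - 2 * t) - (n:ℝ) * (Real.log (1 - 2 * t) / 2)
      ≤ -t * r + t ^ 2 * a / (1 - 2 * t) := by
    rw [key1, hε_def]
    have : -t * ((n:ℝ) + δsq + r) + (t * δsq + 2 * t ^ 2 * δsq / (1 - 2 * t))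
        = -t * r - (n:ℝ) * t + 2 * t ^ 2 * δsq / (1 - 2 * t) := by ring
    rw [this]
    linarith [key2, key4]
  have hfinal : 4 * ((n:ℝ) + 2 * δsq) + 4 * r = 4 * (a + r) := by rw [ha_def]; ring
  rw [hfinal]
  calc -t * ε + (t * δsq / (1 - 2 * t) - (n:ℝ) * (Real.log (1 - 2 * t) / 2))
      = -t * ε + t * δsq / (1 - 2 * t) - (n:ℝ) * (Real.log (1 - 2 * t) / 2) := by ring
    _ ≤ -t * r + t ^ 2 * a / (1 - 2 * t) := hεeq
    _ = -(r ^ 2 / (4 * (a + r))) := key3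

lemma tail_lower (n : ℕ) (hn : 1 ≤ n) (δ : Fin n → ℝ) {r : ℝ} (hr : 0 ≤ r) :
    ((noncentralChiSq n δ) (Set.Iic ((n : ℝ) + (∑ i, δ i ^ 2) - r))).toReal
      ≤ rexp (-(r ^ 2 / (4 * ((n : ℝ) + 2 * ∑ i, δ i ^ 2)))) := by
  have hδsq0 : (0:ℝ) ≤ ∑ i, δ i ^ 2 := Finset.sum_nonneg fun i _ => sq_nonneg _
  set δsq : ℝ := ∑ i, δ i ^ 2 with hδsq_def
  set a : ℝ := (n : ℝ) + 2 * δsq with ha_def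
  have ha : (1:ℝ) ≤ a := by
    have : (1:ℝ) ≤ (n:ℝ) := by exact_mod_cast hn
    simp only [ha_def]; linarith
  set t : ℝ := -(r / (2 * a)) with ht_def
  have ht0 : t ≤ 0 := by
    rw [ht_def]
    have : 0 ≤ r / (2 * a) := by positivity
    linarith
  have ht : t < 1 / 2 := lt_of_le_of_lt ht0 one_half_pos
  have h1t : 0 < 1 - 2 * t := by linarith
  set ε : ℝ := (n : ℝ) + δsq - r with hε_def
  have hXm : Measurable fun x : Fin n → ℝ => ∑ i, (x i + δ i) ^ 2 := by fun_prop
  rw [noncentralChiSq, Measure.map_apply hXm measurableSet_Iic]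
  have hchern := measure_le_le_exp_mul_mgf (μ := Measure.pi fun _ : Fin n => gaussianReal 0 1)
    (X := fun x : Fin n → ℝ => ∑ i, (x i + δ i) ^ 2) ε ht0 (integrable_exp_noncentral n δ ht)
  have hsets : (fun x : Fin n → ℝ => ∑ i, (x i + δ i) ^ 2) ⁻¹' Set.Iic ε
      = {ω : Fin n → ℝ | ∑ i, (ω i + δ i) ^ 2 ≤ ε} := rfl
  rw [hsets]
  refine hchern.trans ?_
  rw [mgf_noncentral_sum n δ ht]
  have hsqrtpow : Real.sqrt (1 - 2 * t) ^ n = rexp ((n : ℝ) * (Real.log (1 - 2 * t) / 2)) := by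
    rw [show Real.sqrt (1 - 2 * t) = rexp (Real.log (1 - 2 * t) / 2) by
        rw [← Real.log_sqrt h1t.le, Real.exp_log (Real.sqrt_pos.2 h1t)]]
    rw [← Real.exp_nat_mul]
  rw [hsqrtpow, ← Real.exp_sub, ← Real.exp_add, Real.exp_le_exp]
  have hs : (0:ℝ) ≤ -(2 * t) := by linarith
  have hlog : -(2 * t) - (-(2 * t)) ^ 2 / 2 ≤ Real.log (1 + -(2 * t)) := aux_log_lower hs
  have key2 : -((n : ℝ) * (Real.log (1 - 2 * t) / 2)) ≤ (n:ℝ) * t + (n:ℝ) * t ^ 2 := by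
    have h1 : Real.log (1 - 2 * t) = Real.log (1 + -(2 * t)) := by ring_nf
    have h2 : -(2 * t) - (-(2 * t)) ^ 2 / 2 = -2 * t - 2 * t ^ 2 := by ring
    have hlog' : -2 * t - 2 * t ^ 2 ≤ Real.log (1 - 2 * t) := by
      rw [h1]
      calc -2 * t - 2 * t ^ 2 = -(2 * t) - (-(2 * t)) ^ 2 / 2 := by ring
        _ ≤ _ := hlog
    have hn0 : (0:ℝ) ≤ (n : ℝ) / 2 := by positivity
    have := mul_le_mul_of_nonneg_left hlog' hn0
    calc -((n : ℝ) * (Real.log (1 - 2 * t) / 2)) = (n:ℝ) / 2 * (-Real.log (1 - 2 * t)) := by ring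
      _ ≤ (n:ℝ) / 2 * (2 * t + 2 * t ^ 2) := by linarith [this]
      _ = (n:ℝ) * t + (n:ℝ) * t ^ 2 := by ring
  have key1 : t * δsq / (1 - 2 * t) ≤ t * δsq + 2 * t ^ 2 * δsq := by
    rw [div_le_iff₀ h1t]
    nlinarith [mul_nonneg (mul_nonneg (neg_nonneg.2 ht0) (mul_nonneg (neg_nonneg.2 ht0) (neg_nonneg.2 ht0))) hδsq0]
  have ha0 : a ≠ 0 := by linarith
  have key3 : t * r + t ^ 2 * a = -(r ^ 2 / (4 * a)) := by
    rw [ht_def]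
    field_simp
    ring
  have hmain : -t * ε + t * δsq / (1 - 2 * t) - (n:ℝ) * (Real.log (1 - 2 * t) / 2)
      ≤ t * r + t ^ 2 * a := by
    have hexpand : -t * ε + (t * δsq + 2 * t ^ 2 * δsq) + ((n:ℝ) * t + (n:ℝ) * t ^ 2)
        = t * r + t ^ 2 * a := by
      rw [hε_def, ha_def]; ring
    linarith [key1, key2]
  calc -t * ε + (t * δsq / (1 - 2 * t) - (n:ℝ) * (Real.log (1 - 2 * t) / 2))
      = -t * ε + t * δsq / (1 - 2 * t) - (n:ℝ) * (Real.log (1 - 2 * t) / 2) := by ring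
    _ ≤ t * r + t ^ 2 * a := hmain
    _ = -(r ^ 2 / (4 * a)) := key3

set_option maxHeartbeats 1000000 in
theorem stmt_10 (n : ℕ) (δ : Fin n → ℝ) (δsq : ℝ) (hδ : δsq = ∑ i, δ i ^ 2)
    (u : ℝ) (hu0 : 0 < u) (hu : u < 1 / 2)
    (δhat : ℝ) (hδhat : 0 ≤ δhat)
    (hl : u ≤ noncentralChiSqCDF n δ (n + δhat ^ 2))
    (hr : noncentralChiSqCDF n δ (n + δhat ^ 2) ≤ 1 - u) :
    δsq - δhat ^ 2
        ≤ Real.sqrt ((4 * n + 8 * δhat ^ 2) * Real.log u⁻¹) + 8 * Real.log u⁻¹ ∧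
    δsq - δhat ^ 2
        ≥ -Real.sqrt ((4 * n + 8 * δhat ^ 2) * Real.log u⁻¹) := by
  have hδsq0 : 0 ≤ δsq := hδ ▸ Finset.sum_nonneg fun i _ => sq_nonneg _
  set c : ℝ := Real.log u⁻¹ with hc_def
  have hc : 0 < c := Real.log_pos (by rw [lt_inv_comm₀ one_pos hu0]; linarith)
  have hexpc : rexp (-c) = u := by
    rw [hc_def, Real.log_inv]
    simpa using Real.exp_log hu0
  rcases Nat.eq_zero_or_pos n with h0 | hn1
  · exfalso
    subst h0
    have hmap : noncentralChiSq 0 δ = Measure.dirac 0 := by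
      rw [noncentralChiSq]
      rw [show (fun x : Fin 0 → ℝ => ∑ i, (x i + δ i) ^ 2) = fun _ => (0:ℝ) from
        funext fun x => by simp]
      rw [Measure.map_const, measure_univ, one_smul]
    have hone : noncentralChiSqCDF 0 δ ((0:ℕ) + δhat ^ 2) = 1 := by
      rw [noncentralChiSqCDF, hmap, Measure.dirac_apply' _ measurableSet_Iic]
      have : (0:ℝ) ∈ Set.Iic (((0:ℕ):ℝ) + δhat ^ 2) := by
        simp [Set.mem_Iic]; positivity
      rw [Set.indicator_of_mem this]
      simp
    rw [hone] at hr
    linarith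
  · -- n ≥ 1
    have hn1' : (1:ℝ) ≤ (n:ℝ) := by exact_mod_cast hn1
    have hD : (0:ℝ) < 4 * (n:ℝ) + 8 * δhat ^ 2 := by nlinarith [sq_nonneg δhat]
    have hXm : Measurable fun x : Fin n → ℝ => ∑ i, (x i + δ i) ^ 2 := by fun_prop
    have hprob : IsProbabilityMeasure (noncentralChiSq n δ) := by
      rw [noncentralChiSq]
      exact Measure.isProbabilityMeasure_map hXm.aemeasurable
    have hs0 : 0 ≤ Real.sqrt ((4 * n + 8 * δhat ^ 2) * c) := Real.sqrt_nonneg _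
    have hs2 : Real.sqrt ((4 * n + 8 * δhat ^ 2) * c) ^ 2 = (4 * n + 8 * δhat ^ 2) * c :=
      Real.sq_sqrt (by positivity)
    constructor
    · -- upper bound
      by_contra hcon
      push_neg at hcon
      set s : ℝ := Real.sqrt ((4 * n + 8 * δhat ^ 2) * c) with hs_def
      set r : ℝ := δsq - δhat ^ 2 with hr_def
      have hrgt : s + 8 * c < r := by linarith
      have hr0 : 0 ≤ r := by linarith
      have htail := tail_lower n hn1 δ (r := r) hr0
      rw [← hδ] at htail
      have harg : ((n:ℝ) + δsq - r) = (n:ℝ) + δhat ^ 2 := by rw [hr_def]; ring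
      rw [harg] at htail
      have hCDF : noncentralChiSqCDF n δ ((n:ℝ) + δhat ^ 2)
          = ((noncentralChiSq n δ) (Set.Iic ((n:ℝ) + δhat ^ 2))).toReal := rfl
      have hkey : ((4:ℝ) * ((n:ℝ) + 2 * δsq)) * c < r ^ 2 := by
        have hexpand : (4:ℝ) * ((n:ℝ) + 2 * δsq) = (4 * n + 8 * δhat ^ 2) + 8 * r := by
          rw [hr_def]; ring
        rw [hexpand]
        have hs2' : s ^ 2 = (4 * n + 8 * δhat ^ 2) * c := hs2
        nlinarith [hs0, hc, hrgt, hs2']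
      have hlt : rexp (-(r ^ 2 / (4 * ((n:ℝ) + 2 * δsq)))) < u := by
        rw [← hexpc, Real.exp_lt_exp, neg_lt_neg_iff]
        rw [lt_div_iff₀ (by nlinarith)]
        linarith [hkey]
      rw [hCDF] at hl
      linarith [htail, hlt, hl]
    · -- lower bound
      by_contra hcon
      push_neg at hcon
      set s : ℝ := Real.sqrt ((4 * n + 8 * δhat ^ 2) * c) with hs_def
      set r : ℝ := δhat ^ 2 - δsq with hr_def
      have hrgt : s < r := by linarith
      have hr0 : 0 ≤ r := by linarith
      have htail := tail_upper n hn1 δ (r := r) hr0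
      rw [← hδ] at htail
      have harg : ((n:ℝ) + δsq + r) = (n:ℝ) + δhat ^ 2 := by rw [hr_def]; ring
      rw [harg] at htail
      -- u ≤ measure of Ici
      set ν := noncentralChiSq n δ with hν_def
      set y : ℝ := (n:ℝ) + δhat ^ 2 with hy_def
      have hsplit : (1:ℝ) ≤ (ν (Set.Iic y)).toReal + (ν (Set.Ici y)).toReal := by
        have h1 := measure_union_le (μ := ν) (Set.Iic y) (Set.Ici y)
        rw [Set.Iic_union_Ici] at h1
        calc (1:ℝ) = (ν Set.univ).toReal := by rw [measure_univ]; simp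
          _ ≤ ((ν (Set.Iic y) + ν (Set.Ici y))).toReal := ENNReal.toReal_mono
              (ENNReal.add_ne_top.2 ⟨measure_ne_top _ _, measure_ne_top _ _⟩) h1
          _ = (ν (Set.Iic y)).toReal + (ν (Set.Ici y)).toReal :=
              ENNReal.toReal_add (measure_ne_top _ _) (measure_ne_top _ _)
      have hCDF : noncentralChiSqCDF n δ y = (ν (Set.Iic y)).toReal := rfl
      have hIci : u ≤ (ν (Set.Ici y)).toReal := by
        rw [hCDF] at hr
        linarith
      have hkey : ((4:ℝ) * ((n:ℝ) + 2 * δsq) + 4 * r) * c < r ^ 2 := by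
        have hle : (4:ℝ) * ((n:ℝ) + 2 * δsq) + 4 * r ≤ 4 * n + 8 * δhat ^ 2 := by
          rw [hr_def]; nlinarith [hr0]
        have hs2' : s ^ 2 = (4 * n + 8 * δhat ^ 2) * c := hs2
        calc ((4:ℝ) * ((n:ℝ) + 2 * δsq) + 4 * r) * c ≤ (4 * n + 8 * δhat ^ 2) * c :=
              mul_le_mul_of_nonneg_right hle hc.le
          _ = s ^ 2 := hs2'.symm
          _ < r ^ 2 := by
              have := mul_self_lt_mul_self hs0 hrgt
              nlinarith [this]
      have hlt : rexp (-(r ^ 2 / (4 * ((n:ℝ) + 2 * δsq) + 4 * r))) < u := by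
        rw [← hexpc, Real.exp_lt_exp, neg_lt_neg_iff]
        rw [lt_div_iff₀ (by nlinarith)]
        linarith [hkey]
      have : u < u := lt_of_le_of_lt hIci (htail.trans_lt hlt)
      exact lt_irrefl u this
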